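/- arXiv:1606.01985 — 2 statements merged into one kernel-verified Lean document; each statement's English description precedes it below -/
import Mathlib

section
/- Degradedness Markov chain for the R31 converse (equation (3R2)): for any (n, M13, M23, M31, M32) code for the additive-noise MA/DBC with i.i.d. noise processes {Z_{1,i}} and {Z_{2,i}} that are mutually independent, independent of Z3^n and of the messages, for every 1 ≤ i ≤ n the random variable Ỹ_{2,i} is conditionally independent of X_{3,i} given (Ỹ_{1,i}, Ỹ1^{i−1}, Ỹ2^{i−1}, W32, W13, W23), where Ỹ_{1,j} = X_{3,j} + Z_{1,j} and Ỹ_{2,j} = X_{3,j} + Z_{1,j} + Z_{2,j}. -/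
open MeasureTheory ProbabilityTheory Real Filter Topology
open scoped ENNReal

noncomputable section

/-- Shannon entropy (in the same base as `Real.log`) of a finitely-valued random variable. -/
def Hent {Ω S : Type*} [MeasurableSpace Ω] [Fintype S] (μ : Measure Ω) (X : Ω → S) : ℝ :=
  ∑ s : S, Real.negMulLog ((μ (X ⁻¹' {s})).toReal)

/-- Mutual information I(X ; Y) = H(X) + H(Y) − H(X, Y). -/
def MI {Ω S T : Type*} [MeasurableSpace Ω] [Fintype S] [Fintype T]
    (μ : Measure Ω) (X : Ω → S) (Y : Ω → T) : ℝ :=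
  Hent μ X + Hent μ Y - Hent μ (fun ω => (X ω, Y ω))

/-- Conditional mutual information
I(X ; Y | Z) = H(X, Z) + H(Y, Z) − H(X, Y, Z) − H(Z). -/
def CMI {Ω S T U : Type*} [MeasurableSpace Ω] [Fintype S] [Fintype T] [Fintype U]
    (μ : Measure Ω) (X : Ω → S) (Y : Ω → T) (Z : Ω → U) : ℝ :=
  Hent μ (fun ω => (X ω, Z ω)) + Hent μ (fun ω => (Y ω, Z ω))
    - Hent μ (fun ω => (X ω, Y ω, Z ω)) - Hent μ Z

/-- Conditional Shannon entropy H(X | Y) = H(X, Y) − H(Y). -/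
def Hcond {Ω S T : Type*} [MeasurableSpace Ω] [Fintype S] [Fintype T]
    (μ : Measure Ω) (X : Ω → S) (Y : Ω → T) : ℝ :=
  Hent μ (fun ω => (X ω, Y ω)) - Hent μ Y

/-- Elementary conditional independence of finitely-valued random variables X and Y given Z:
for all values a, b, c,  P(X=a, Y=b, Z=c) · P(Z=c) = P(X=a, Z=c) · P(Y=b, Z=c). -/
def CondIndepElem {Ω S T U : Type*} [MeasurableSpace Ω] (μ : Measure Ω)
    (X : Ω → S) (Y : Ω → T) (Z : Ω → U) : Prop :=
  ∀ (a : S) (b : T) (c : U),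
    μ (X ⁻¹' {a} ∩ Y ⁻¹' {b} ∩ Z ⁻¹' {c}) * μ (Z ⁻¹' {c}) =
      μ (X ⁻¹' {a} ∩ Z ⁻¹' {c}) * μ (Y ⁻¹' {b} ∩ Z ⁻¹' {c})

/-- An (n, M13, M23, M31, M32) code for the multiple access / degraded broadcast channel. -/
structure MACode (q n M13 M23 M31 M32 : ℕ) where
  f1 : Fin M13 → (i : Fin n) → (Fin i.1 → ZMod q) → ZMod q
  f2 : Fin M23 → (i : Fin n) → (Fin i.1 → ZMod q) → ZMod q
  f3 : Fin M31 → Fin M32 → (i : Fin n) → (Fin i.1 → ZMod q) → ZMod q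
  g1 : Fin M13 → (Fin n → ZMod q) → Fin M31
  g2 : Fin M23 → (Fin n → ZMod q) → Fin M32
  g3 : Fin M31 → Fin M32 → (Fin n → ZMod q) → Fin M13 × Fin M23

/-- The triple of channel inputs (X_{1,i}, X_{2,i}, X_{3,i}) produced by the adaptive
encoders, where the past outputs are Y_{1,j} = X_{1,j} + X_{3,j} + Z_{1,j},
Y_{2,j} = X_{2,j} + X_{3,j} + Z_{1,j} + Z_{2,j} and
Y_{3,j} = X_{1,j} + X_{2,j} + X_{3,j} + Z_{3,j} (addition mod q). -/
def MAX {q n M13 M23 M31 M32 : ℕ} (C : MACode q n M13 M23 M31 M32)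
    (w13 : Fin M13) (w23 : Fin M23) (w31 : Fin M31) (w32 : Fin M32)
    (z1 z2 z3 : Fin n → ZMod q) : (i : Fin n) → ZMod q × ZMod q × ZMod q
  | i =>
    (C.f1 w13 i (fun j =>
        have h : j.1 < n := j.2.trans i.2
        (MAX C w13 w23 w31 w32 z1 z2 z3 ⟨j.1, h⟩).1 +
          (MAX C w13 w23 w31 w32 z1 z2 z3 ⟨j.1, h⟩).2.2 + z1 ⟨j.1, h⟩),
     C.f2 w23 i (fun j =>
        have h : j.1 < n := j.2.trans i.2
        (MAX C w13 w23 w31 w32 z1 z2 z3 ⟨j.1, h⟩).2.1 +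
          (MAX C w13 w23 w31 w32 z1 z2 z3 ⟨j.1, h⟩).2.2 + z1 ⟨j.1, h⟩ + z2 ⟨j.1, h⟩),
     C.f3 w31 w32 i (fun j =>
        have h : j.1 < n := j.2.trans i.2
        (MAX C w13 w23 w31 w32 z1 z2 z3 ⟨j.1, h⟩).1 +
          (MAX C w13 w23 w31 w32 z1 z2 z3 ⟨j.1, h⟩).2.1 +
          (MAX C w13 w23 w31 w32 z1 z2 z3 ⟨j.1, h⟩).2.2 + z3 ⟨j.1, h⟩))
  termination_by i => i.1
  decreasing_by all_goals exact j.2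

/-- Output sequence Y_1^n at user 1. -/
def MAY1 {q n M13 M23 M31 M32 : ℕ} (C : MACode q n M13 M23 M31 M32)
    (w13 : Fin M13) (w23 : Fin M23) (w31 : Fin M31) (w32 : Fin M32)
    (z1 z2 z3 : Fin n → ZMod q) (i : Fin n) : ZMod q :=
  (MAX C w13 w23 w31 w32 z1 z2 z3 i).1 + (MAX C w13 w23 w31 w32 z1 z2 z3 i).2.2 + z1 i

/-- Output sequence Y_2^n at user 2. -/
def MAY2 {q n M13 M23 M31 M32 : ℕ} (C : MACode q n M13 M23 M31 M32)
    (w13 : Fin M13) (w23 : Fin M23) (w31 : Fin M31) (w32 : Fin M32)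
    (z1 z2 z3 : Fin n → ZMod q) (i : Fin n) : ZMod q :=
  (MAX C w13 w23 w31 w32 z1 z2 z3 i).2.1 + (MAX C w13 w23 w31 w32 z1 z2 z3 i).2.2 +
    z1 i + z2 i

/-- Output sequence Y_3^n at user 3. -/
def MAY3 {q n M13 M23 M31 M32 : ℕ} (C : MACode q n M13 M23 M31 M32)
    (w13 : Fin M13) (w23 : Fin M23) (w31 : Fin M31) (w32 : Fin M32)
    (z1 z2 z3 : Fin n → ZMod q) (i : Fin n) : ZMod q :=
  (MAX C w13 w23 w31 w32 z1 z2 z3 i).1 + (MAX C w13 w23 w31 w32 z1 z2 z3 i).2.1 +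
    (MAX C w13 w23 w31 w32 z1 z2 z3 i).2.2 + z3 i

/-- The broadcast-direction "clean" output letter Ỹ_{1,j} = X_{3,j} + Z_{1,j}. -/
def tY1 {q n M13 M23 M31 M32 : ℕ} (C : MACode q n M13 M23 M31 M32)
    (w13 : Fin M13) (w23 : Fin M23) (w31 : Fin M31) (w32 : Fin M32)
    (z1 z2 z3 : Fin n → ZMod q) (j : Fin n) : ZMod q :=
  (MAX C w13 w23 w31 w32 z1 z2 z3 j).2.2 + z1 j

/-- The broadcast-direction degraded output letter Ỹ_{2,j} = X_{3,j} + Z_{1,j} + Z_{2,j}. -/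
def tY2 {q n M13 M23 M31 M32 : ℕ} (C : MACode q n M13 M23 M31 M32)
    (w13 : Fin M13) (w23 : Fin M23) (w31 : Fin M31) (w32 : Fin M32)
    (z1 z2 z3 : Fin n → ZMod q) (j : Fin n) : ZMod q :=
  (MAX C w13 w23 w31 w32 z1 z2 z3 j).2.2 + z1 j + z2 j


lemma MAX_congr {q n M13 M23 M31 M32 : ℕ} (C : MACode q n M13 M23 M31 M32)
    (w13 : Fin M13) (w23 : Fin M23) (w31 : Fin M31) (w32 : Fin M32) :
    ∀ (k : ℕ) (hk : k < n) (z1 z2 z3 z1' z2' z3' : Fin n → ZMod q),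
      (∀ j : Fin n, j.1 < k → z1 j = z1' j ∧ z2 j = z2' j ∧ z3 j = z3' j) →
      MAX C w13 w23 w31 w32 z1 z2 z3 ⟨k, hk⟩ = MAX C w13 w23 w31 w32 z1' z2' z3' ⟨k, hk⟩ := by
  intro k
  induction k using Nat.strong_induction_on with
  | _ k IH =>
    intro hk z1 z2 z3 z1' z2' z3' h
    rw [MAX, MAX]
    have key : ∀ j : Fin k, MAX C w13 w23 w31 w32 z1 z2 z3 ⟨j.1, j.2.trans hk⟩ =
        MAX C w13 w23 w31 w32 z1' z2' z3' ⟨j.1, j.2.trans hk⟩ := fun j =>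
      IH j.1 j.2 (j.2.trans hk) z1 z2 z3 z1' z2' z3' (fun m hm => h m (hm.trans j.2))
    have h1 : ∀ (j : Fin n) (_ : j.1 < k), z1 j = z1' j := fun j hj => (h j hj).1
    have h2 : ∀ (j : Fin n) (_ : j.1 < k), z2 j = z2' j := fun j hj => (h j hj).2.1
    have h3 : ∀ (j : Fin n) (_ : j.1 < k), z3 j = z3' j := fun j hj => (h j hj).2.2
    simp only [Prod.mk.injEq]
    refine ⟨?_, ?_, ?_⟩
    · congr 1
      funext j
      simp only [key ⟨j.1, j.2⟩, h1 ⟨j.1, j.2.trans hk⟩ j.2]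
    · congr 1
      funext j
      simp only [key ⟨j.1, j.2⟩, h1 ⟨j.1, j.2.trans hk⟩ j.2, h2 ⟨j.1, j.2.trans hk⟩ j.2]
    · congr 1
      funext j
      simp only [key ⟨j.1, j.2⟩, h3 ⟨j.1, j.2.trans hk⟩ j.2]

lemma fiber_indep {Ω α : Type*} [MeasurableSpace Ω] (μ : Measure Ω) [Fintype α]
    (V : Ω → α) (hV : ∀ u : α, MeasurableSet (V ⁻¹' {u}))
    (t : Set Ω) (ht : MeasurableSet t)
    (h : ∀ u : α, μ (t ∩ V ⁻¹' {u}) = μ t * μ (V ⁻¹' {u})) (s : Set α) :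
    μ (t ∩ V ⁻¹' s) = μ t * μ (V ⁻¹' s) := by
  classical
  have hdecomp : ∀ (A : Set Ω), MeasurableSet A →
      μ (A ∩ V ⁻¹' s) = ∑ u : α, if u ∈ s then μ (A ∩ V ⁻¹' {u}) else 0 := by
    intro A hA
    have hef : A ∩ V ⁻¹' s = ⋃ u : α, (if u ∈ s then A ∩ V ⁻¹' {u} else ∅) := by
      ext ω
      simp only [Set.mem_iUnion, Set.mem_inter_iff, Set.mem_preimage]
      constructor
      · rintro ⟨hω, hs⟩
        exact ⟨V ω, by simp [hs, hω]⟩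
      · rintro ⟨u, hu⟩
        by_cases h' : u ∈ s
        · simp only [if_pos h'] at hu
          obtain ⟨h1, h2⟩ := hu
          simp only [Set.mem_preimage, Set.mem_singleton_iff] at h2
          exact ⟨h1, h2 ▸ h'⟩
        · simp [if_neg h'] at hu
    rw [hef, measure_iUnion, tsum_fintype]
    · refine Finset.sum_congr rfl fun u _ => ?_
      by_cases h' : u ∈ s <;> simp [h']
    · intro u u' huu'
      simp only [Function.onFun]
      by_cases h1 : u ∈ s <;> by_cases h2 : u' ∈ s <;>
        simp only [if_pos, if_neg, h1, h2, if_true, if_false, Set.disjoint_empty,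
          Set.empty_disjoint]
      refine Set.disjoint_left.mpr ?_
      rintro ω ⟨-, hw1⟩ ⟨-, hw2⟩
      simp only [Set.mem_preimage, Set.mem_singleton_iff] at hw1 hw2
      exact huu' (hw1 ▸ hw2 ▸ rfl)
    · intro u
      by_cases h' : u ∈ s <;> simp [h', hA.inter (hV u)]
  have h2 : μ (V ⁻¹' s) = ∑ u : α, if u ∈ s then μ (V ⁻¹' {u}) else 0 := by
    have := hdecomp Set.univ MeasurableSet.univ
    simpa using this
  rw [hdecomp t ht, h2, Finset.mul_sum]
  refine Finset.sum_congr rfl fun u _ => ?_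
  by_cases h' : u ∈ s <;> simp [h', h u]

/-- Zero-padding of a prefix noise vector. -/
def padZ {q n : ℕ} (i : Fin n) (v : Fin i.1 → ZMod q) : Fin n → ZMod q :=
  fun j => if h : j.1 < i.1 then v ⟨j.1, h⟩ else 0

/-- The pair (X_{3,i}, conditioning tuple) as a function of
(W13, W23, W31, W32, Z1, Z3, Z2-prefix). -/
def condF {q n M13 M23 M31 M32 : ℕ} (C : MACode q n M13 M23 M31 M32) (i : Fin n)
    (u : Fin M13 × Fin M23 × Fin M31 × Fin M32 × (Fin n → ZMod q) × (Fin n → ZMod q) ×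
      (Fin i.1 → ZMod q)) :
    ZMod q × ZMod q × (Fin i.1 → ZMod q) × (Fin i.1 → ZMod q) × Fin M32 × Fin M13 × Fin M23 :=
  ((MAX C u.1 u.2.1 u.2.2.1 u.2.2.2.1 u.2.2.2.2.1 (padZ i u.2.2.2.2.2.2) u.2.2.2.2.2.1 i).2.2,
   tY1 C u.1 u.2.1 u.2.2.1 u.2.2.2.1 u.2.2.2.2.1 (padZ i u.2.2.2.2.2.2) u.2.2.2.2.2.1 i,
   (fun j : Fin i.1 => tY1 C u.1 u.2.1 u.2.2.1 u.2.2.2.1 u.2.2.2.2.1 (padZ i u.2.2.2.2.2.2)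
      u.2.2.2.2.2.1 ⟨j.1, j.2.trans i.2⟩),
   (fun j : Fin i.1 => tY2 C u.1 u.2.1 u.2.2.1 u.2.2.2.1 u.2.2.2.2.1 (padZ i u.2.2.2.2.2.2)
      u.2.2.2.2.2.1 ⟨j.1, j.2.trans i.2⟩),
   u.2.2.2.1, u.1, u.2.1)

/-- **Degradedness Markov chain for the R31 converse** (equation (3R2)): with {Z_{1,i}}
and {Z_{2,i}} i.i.d., mutually independent, and independent of Z3^n and of the messages,
for every time i (0-based; 1-based time i+1, so 1 ≤ i+1 ≤ n) the degraded output letter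
Ỹ_{2,i} is conditionally independent of X_{3,i} given
(Ỹ_{1,i}, Ỹ1^{i−1}, Ỹ2^{i−1}, W32, W13, W23), where Ỹ_{1,j} = X_{3,j} + Z_{1,j} and
Ỹ_{2,j} = X_{3,j} + Z_{1,j} + Z_{2,j}. -/
theorem madbc_r31_degraded_markov_chain {Ω : Type*} [MeasurableSpace Ω] (μ : Measure Ω)
    [IsProbabilityMeasure μ] (q : ℕ) [NeZero q] (hq : 2 ≤ q)
    (n M13 M23 M31 M32 : ℕ) (C : MACode q n M13 M23 M31 M32)
    (W13 : Ω → Fin M13) (W23 : Ω → Fin M23) (W31 : Ω → Fin M31) (W32 : Ω → Fin M32)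
    (Z1 Z2 Z3 : Ω → Fin n → ZMod q)
    (hW13 : Measurable W13) (hW23 : Measurable W23)
    (hW31 : Measurable W31) (hW32 : Measurable W32)
    (hZ1 : Measurable Z1) (hZ2 : Measurable Z2) (hZ3 : Measurable Z3)
    -- {Z_{1,i}} and {Z_{2,i}} are i.i.d. processes
    (hiid1 : iIndepFun (fun i ω => Z1 ω i) μ)
    (hid1 : ∀ i j : Fin n, IdentDistrib (fun ω => Z1 ω i) (fun ω => Z1 ω j) μ μ)
    (hiid2 : iIndepFun (fun i ω => Z2 ω i) μ)
    (hid2 : ∀ i j : Fin n, IdentDistrib (fun ω => Z2 ω i) (fun ω => Z2 ω j) μ μ)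
    -- Z1^n and Z2^n are mutually independent ...
    (hindep12 : IndepFun Z1 Z2 μ)
    -- ... and independent of Z3^n and of the messages
    (hindep : IndepFun (fun ω => (Z1 ω, Z2 ω))
      (fun ω => (Z3 ω, W13 ω, W23 ω, W31 ω, W32 ω)) μ) :
    ∀ i : Fin n,
      CondIndepElem μ
        -- X = Ỹ_{2,i}
        (fun ω => tY2 C (W13 ω) (W23 ω) (W31 ω) (W32 ω) (Z1 ω) (Z2 ω) (Z3 ω) i)
        -- Y = X_{3,i}
        (fun ω => (MAX C (W13 ω) (W23 ω) (W31 ω) (W32 ω) (Z1 ω) (Z2 ω) (Z3 ω) i).2.2)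
        -- Z = (Ỹ_{1,i}, Ỹ1^{i-1}, Ỹ2^{i-1}, W32, W13, W23)
        (fun ω =>
          (tY1 C (W13 ω) (W23 ω) (W31 ω) (W32 ω) (Z1 ω) (Z2 ω) (Z3 ω) i,
           (fun j : Fin i.1 =>
              tY1 C (W13 ω) (W23 ω) (W31 ω) (W32 ω) (Z1 ω) (Z2 ω) (Z3 ω)
                ⟨j.1, j.2.trans i.2⟩),
           (fun j : Fin i.1 =>
              tY2 C (W13 ω) (W23 ω) (W31 ω) (W32 ω) (Z1 ω) (Z2 ω) (Z3 ω)
                ⟨j.1, j.2.trans i.2⟩),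
           W32 ω, W13 ω, W23 ω)) := by
  intro i a b c
  classical
  have hZ2i : ∀ k : Fin n, Measurable fun ω => Z2 ω k :=
    fun k => (measurable_pi_apply k).comp hZ2
  -- the "everything else" random variable
  set U : Ω → Fin M13 × Fin M23 × Fin M31 × Fin M32 × (Fin n → ZMod q) × (Fin n → ZMod q) ×
      (Fin i.1 → ZMod q) :=
    fun ω => (W13 ω, W23 ω, W31 ω, W32 ω, Z1 ω, Z3 ω,
      fun j : Fin i.1 => Z2 ω ⟨j.1, j.2.trans i.2⟩) with hUdef
  have hUmeas : Measurable U :=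
    hW13.prodMk (hW23.prodMk (hW31.prodMk (hW32.prodMk (hZ1.prodMk (hZ3.prodMk
      (measurable_pi_lambda _ fun j => hZ2i _))))))
  -- Z_{2,i} is independent of the prefix of Z2
  have hN2p : IndepFun (fun ω => Z2 ω i)
      (fun ω => fun j : Fin i.1 => Z2 ω ⟨j.1, j.2.trans i.2⟩) μ := by
    have h0 := hiid2.indepFun_finset {i} (Finset.univ.filter fun j : Fin n => j.1 < i.1)
      (by simp [Finset.disjoint_left]) (fun k => hZ2i k)
    have h1 := h0.comp (_mγ := inferInstance) (_mγ' := inferInstance)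
      (φ := fun g : (({i} : Finset (Fin n)) : Type) → ZMod q =>
        g ⟨i, Finset.mem_singleton_self i⟩)
      (ψ := fun g : ((Finset.univ.filter fun j : Fin n => j.1 < i.1 : Finset (Fin n)) : Type)
          → ZMod q =>
        fun j : Fin i.1 => g ⟨⟨j.1, j.2.trans i.2⟩, by
          simp only [Finset.mem_filter, Finset.mem_univ, true_and]
          exact j.2⟩)
      (measurable_pi_apply _) (measurable_pi_lambda _ fun j => measurable_pi_apply _)
    exact h1
  -- the key independence: Z_{2,i} is independent of U at the level of fibers
  have hfiber : ∀ (d : ZMod q) (u : Fin M13 × Fin M23 × Fin M31 × Fin M32 ×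
      (Fin n → ZMod q) × (Fin n → ZMod q) × (Fin i.1 → ZMod q)),
      μ ((fun ω => Z2 ω i) ⁻¹' {d} ∩ U ⁻¹' {u}) =
        μ ((fun ω => Z2 ω i) ⁻¹' {d}) * μ (U ⁻¹' {u}) := by
    rintro d ⟨w13, w23, w31, w32, z1, z3, v⟩
    have e1 : (fun ω => Z2 ω i) ⁻¹' {d} ∩ U ⁻¹' {(w13, w23, w31, w32, z1, z3, v)} =
        (fun ω => (Z1 ω, Z2 ω)) ⁻¹'
          ({z1} ×ˢ {g : Fin n → ZMod q | g i = d ∧ ∀ j : Fin i.1, g ⟨j.1, j.2.trans i.2⟩ = v j})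
        ∩ (fun ω => (Z3 ω, W13 ω, W23 ω, W31 ω, W32 ω)) ⁻¹' {(z3, w13, w23, w31, w32)} := by
      ext ω
      simp only [hUdef, Set.mem_inter_iff, Set.mem_preimage, Set.mem_singleton_iff,
        Prod.mk.injEq, Set.mem_prod, Set.mem_setOf_eq, funext_iff]
      tauto
    have e4 : U ⁻¹' {(w13, w23, w31, w32, z1, z3, v)} =
        (fun ω => (Z1 ω, Z2 ω)) ⁻¹'
          ({z1} ×ˢ {g : Fin n → ZMod q | ∀ j : Fin i.1, g ⟨j.1, j.2.trans i.2⟩ = v j})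
        ∩ (fun ω => (Z3 ω, W13 ω, W23 ω, W31 ω, W32 ω)) ⁻¹' {(z3, w13, w23, w31, w32)} := by
      ext ω
      simp only [hUdef, Set.mem_inter_iff, Set.mem_preimage, Set.mem_singleton_iff,
        Prod.mk.injEq, Set.mem_prod, Set.mem_setOf_eq, funext_iff]
      tauto
    have e2 : ∀ s : Set (Fin n → ZMod q), (fun ω => (Z1 ω, Z2 ω)) ⁻¹' ({z1} ×ˢ s) =
        Z1 ⁻¹' {z1} ∩ Z2 ⁻¹' s := fun s => rfl
    have e3 : Z2 ⁻¹' {g : Fin n → ZMod q | g i = d ∧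
        ∀ j : Fin i.1, g ⟨j.1, j.2.trans i.2⟩ = v j} =
        (fun ω => Z2 ω i) ⁻¹' {d} ∩
          (fun ω => fun j : Fin i.1 => Z2 ω ⟨j.1, j.2.trans i.2⟩) ⁻¹' {v} := by
      ext ω
      simp [funext_iff]
    have e5 : Z2 ⁻¹' {g : Fin n → ZMod q | ∀ j : Fin i.1, g ⟨j.1, j.2.trans i.2⟩ = v j} =
        (fun ω => fun j : Fin i.1 => Z2 ω ⟨j.1, j.2.trans i.2⟩) ⁻¹' {v} := by
      ext ω
      simp [funext_iff]
    rw [e1, e4,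
      hindep.measure_inter_preimage_eq_mul _ _ .of_discrete .of_discrete,
      hindep.measure_inter_preimage_eq_mul _ _ .of_discrete .of_discrete,
      e2, e2,
      hindep12.measure_inter_preimage_eq_mul _ _ .of_discrete .of_discrete,
      hindep12.measure_inter_preimage_eq_mul _ _ .of_discrete .of_discrete,
      e3, e5,
      hN2p.measure_inter_preimage_eq_mul _ _ .of_discrete .of_discrete]
    ring
  have hfib_meas : ∀ u, MeasurableSet (U ⁻¹' {u}) :=
    fun u => hUmeas (measurableSet_singleton u)
  have htmeas : MeasurableSet ((fun ω => Z2 ω i) ⁻¹' {a - c.1}) :=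
    hZ2i i (measurableSet_singleton _)
  have hkey : ∀ s : Set (Fin M13 × Fin M23 × Fin M31 × Fin M32 × (Fin n → ZMod q) ×
      (Fin n → ZMod q) × (Fin i.1 → ZMod q)),
      μ ((fun ω => Z2 ω i) ⁻¹' {a - c.1} ∩ U ⁻¹' s) =
        μ ((fun ω => Z2 ω i) ⁻¹' {a - c.1}) * μ (U ⁻¹' s) :=
    fun s => fiber_indep μ U hfib_meas _ htmeas (hfiber (a - c.1)) s
  -- the channel inputs up to time i depend only on the Z2-prefix
  have hpad : ∀ (ω : Ω) (k : Fin n), k.1 ≤ i.1 →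
      MAX C (W13 ω) (W23 ω) (W31 ω) (W32 ω) (Z1 ω) (Z2 ω) (Z3 ω) k =
      MAX C (W13 ω) (W23 ω) (W31 ω) (W32 ω) (Z1 ω)
        (padZ i (fun j : Fin i.1 => Z2 ω ⟨j.1, j.2.trans i.2⟩)) (Z3 ω) k := by
    intro ω k hk
    have h := MAX_congr C (W13 ω) (W23 ω) (W31 ω) (W32 ω) k.1 k.2 (Z1 ω) (Z2 ω) (Z3 ω)
      (Z1 ω) (padZ i fun j : Fin i.1 => Z2 ω ⟨j.1, j.2.trans i.2⟩) (Z3 ω) ?_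
    · simpa using h
    · intro j hj
      refine ⟨rfl, ?_, rfl⟩
      have hji : j.1 < i.1 := lt_of_lt_of_le hj hk
      simp only [padZ, dif_pos hji]
  -- (X_{3,i}, conditioning tuple) is a function of U
  have hF : ∀ ω : Ω,
      (((MAX C (W13 ω) (W23 ω) (W31 ω) (W32 ω) (Z1 ω) (Z2 ω) (Z3 ω) i).2.2,
        tY1 C (W13 ω) (W23 ω) (W31 ω) (W32 ω) (Z1 ω) (Z2 ω) (Z3 ω) i,
        (fun j : Fin i.1 =>
          tY1 C (W13 ω) (W23 ω) (W31 ω) (W32 ω) (Z1 ω) (Z2 ω) (Z3 ω) ⟨j.1, j.2.trans i.2⟩),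
        (fun j : Fin i.1 =>
          tY2 C (W13 ω) (W23 ω) (W31 ω) (W32 ω) (Z1 ω) (Z2 ω) (Z3 ω) ⟨j.1, j.2.trans i.2⟩),
        W32 ω, W13 ω, W23 ω) :
        ZMod q × ZMod q × (Fin i.1 → ZMod q) × (Fin i.1 → ZMod q) × Fin M32 × Fin M13 ×
          Fin M23) = condF C i (U ω) := by
    intro ω
    simp only [condF, hUdef, Prod.mk.injEq]
    refine ⟨?_, ?_, ?_, ?_, trivial⟩
    · rw [hpad ω i le_rfl]
    · simp only [tY1]
      rw [hpad ω i le_rfl]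
    · funext j
      simp only [tY1]
      rw [hpad ω ⟨j.1, j.2.trans i.2⟩ (le_of_lt j.2)]
    · funext j
      simp only [tY2]
      rw [hpad ω ⟨j.1, j.2.trans i.2⟩ (le_of_lt j.2)]
      simp [padZ, j.2]
  have htY12 : ∀ ω : Ω,
      tY2 C (W13 ω) (W23 ω) (W31 ω) (W32 ω) (Z1 ω) (Z2 ω) (Z3 ω) i =
      tY1 C (W13 ω) (W23 ω) (W31 ω) (W32 ω) (Z1 ω) (Z2 ω) (Z3 ω) i + Z2 ω i := fun ω => rfl
  -- set identities
  have hC : (fun ω =>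
        (tY1 C (W13 ω) (W23 ω) (W31 ω) (W32 ω) (Z1 ω) (Z2 ω) (Z3 ω) i,
         (fun j : Fin i.1 =>
            tY1 C (W13 ω) (W23 ω) (W31 ω) (W32 ω) (Z1 ω) (Z2 ω) (Z3 ω)
              ⟨j.1, j.2.trans i.2⟩),
         (fun j : Fin i.1 =>
            tY2 C (W13 ω) (W23 ω) (W31 ω) (W32 ω) (Z1 ω) (Z2 ω) (Z3 ω)
              ⟨j.1, j.2.trans i.2⟩),
         W32 ω, W13 ω, W23 ω)) ⁻¹' {c} = U ⁻¹' {u | (condF C i u).2 = c} := by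
    ext ω
    simp only [Set.mem_preimage, Set.mem_singleton_iff, Set.mem_setOf_eq, ← hF ω]
  have hB : (fun ω =>
        (MAX C (W13 ω) (W23 ω) (W31 ω) (W32 ω) (Z1 ω) (Z2 ω) (Z3 ω) i).2.2) ⁻¹' {b} =
      U ⁻¹' {u | (condF C i u).1 = b} := by
    ext ω
    simp only [Set.mem_preimage, Set.mem_singleton_iff, Set.mem_setOf_eq, ← hF ω]
  have hs12 : U ⁻¹' {u | (condF C i u).2 = c} ∩ U ⁻¹' {u | (condF C i u).1 = b} =
      U ⁻¹' {u | condF C i u = (b, c)} := by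
    ext ω
    simp only [Set.mem_inter_iff, Set.mem_preimage, Set.mem_setOf_eq, Prod.ext_iff]
    tauto
  have hAC : (fun ω => tY2 C (W13 ω) (W23 ω) (W31 ω) (W32 ω) (Z1 ω) (Z2 ω) (Z3 ω) i) ⁻¹' {a} ∩
      (fun ω =>
        (tY1 C (W13 ω) (W23 ω) (W31 ω) (W32 ω) (Z1 ω) (Z2 ω) (Z3 ω) i,
         (fun j : Fin i.1 =>
            tY1 C (W13 ω) (W23 ω) (W31 ω) (W32 ω) (Z1 ω) (Z2 ω) (Z3 ω)
              ⟨j.1, j.2.trans i.2⟩),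
         (fun j : Fin i.1 =>
            tY2 C (W13 ω) (W23 ω) (W31 ω) (W32 ω) (Z1 ω) (Z2 ω) (Z3 ω)
              ⟨j.1, j.2.trans i.2⟩),
         W32 ω, W13 ω, W23 ω)) ⁻¹' {c} =
      (fun ω => Z2 ω i) ⁻¹' {a - c.1} ∩ U ⁻¹' {u | (condF C i u).2 = c} := by
    rw [← hC]
    ext ω
    simp only [Set.mem_inter_iff, Set.mem_preimage, Set.mem_singleton_iff]
    constructor
    · rintro ⟨h1, h2⟩
      refine ⟨?_, h2⟩
      have hc1 : tY1 C (W13 ω) (W23 ω) (W31 ω) (W32 ω) (Z1 ω) (Z2 ω) (Z3 ω) i = c.1 :=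
        congrArg Prod.fst h2
      rw [htY12 ω, hc1] at h1
      exact eq_sub_of_add_eq' h1
    · rintro ⟨h1, h2⟩
      refine ⟨?_, h2⟩
      have hc1 : tY1 C (W13 ω) (W23 ω) (W31 ω) (W32 ω) (Z1 ω) (Z2 ω) (Z3 ω) i = c.1 :=
        congrArg Prod.fst h2
      rw [htY12 ω, hc1, h1, add_comm, sub_add_cancel]
  have hs12' : U ⁻¹' {u | (condF C i u).1 = b} ∩ U ⁻¹' {u | (condF C i u).2 = c} =
      U ⁻¹' {u | condF C i u = (b, c)} := by
    ext ω
    simp only [Set.mem_inter_iff, Set.mem_preimage, Set.mem_setOf_eq, Prod.ext_iff]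
  rw [Set.inter_right_comm, hAC, Set.inter_assoc, hB, hs12, hC, hs12', hkey, hkey]
  ring


end
end

section
/- Single-letterization bound for R32: for any (n, M13, M23, M31, M32) code for the additive-noise MA/DBC with i.i.d. noise processes {Z_{1,i}} and {Z_{2,i}} that are mutually independent, independent of Z3^n and of the messages, one has I(W32; Y2^n | W23) ≤ Σ_{i=1}^n I(U_i; Ỹ_{2,i}), where U_i = (Ỹ1^{i−1}, Ỹ2^{i−1}, W32, W13, W23), Ỹ_{1,j} = X_{3,j} + Z_{1,j} and Ỹ_{2,j} = X_{3,j} + Z_{1,j} + Z_{2,j}. -/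
open MeasureTheory ProbabilityTheory Real Filter Topology
open scoped ENNReal

noncomputable section

set_option linter.unusedSectionVars false

section Aux
variable {Ω : Type*} [MeasurableSpace Ω] (μ : Measure Ω) [IsProbabilityMeasure μ]

lemma Hent_comp_inj {S T : Type*} [Fintype S] [Fintype T] (φ : S → T)
    (hφ : Function.Injective φ) (X : Ω → S) :
    Hent μ (fun ω => φ (X ω)) = Hent μ X := by
  classical
  unfold Hent
  calc ∑ t : T, Real.negMulLog ((μ ((fun ω => φ (X ω)) ⁻¹' {t})).toReal)
      = ∑ t ∈ Finset.univ.image φ,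
          Real.negMulLog ((μ ((fun ω => φ (X ω)) ⁻¹' {t})).toReal) := by
        refine (Finset.sum_subset (Finset.subset_univ _) ?_).symm
        intro t _ ht
        have : (fun ω => φ (X ω)) ⁻¹' {t} = ∅ := by
          ext ω
          simp only [Set.mem_preimage, Set.mem_singleton_iff, Set.mem_empty_iff_false,
            iff_false]
          intro h
          exact ht (Finset.mem_image.2 ⟨X ω, Finset.mem_univ _, h⟩)
        simp [this]
    _ = ∑ s : S, Real.negMulLog ((μ ((fun ω => φ (X ω)) ⁻¹' {φ s})).toReal) :=
        Finset.sum_image (fun _ _ _ _ h => hφ h)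
    _ = ∑ s : S, Real.negMulLog ((μ (X ⁻¹' {s})).toReal) := by
        apply Finset.sum_congr rfl
        intro s _
        have : (fun ω => φ (X ω)) ⁻¹' {φ s} = X ⁻¹' {s} := by
          ext ω; simp [hφ.eq_iff]
        rw [this]

lemma Hent_congr_inj {S T : Type*} [Fintype S] [Fintype T] {X : Ω → S} {Y : Ω → T}
    (φ : S → T) (hφ : Function.Injective φ) (h : ∀ ω, Y ω = φ (X ω)) :
    Hent μ Y = Hent μ X := by
  rw [show Y = fun ω => φ (X ω) from funext h]
  exact Hent_comp_inj μ φ hφ X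

lemma Hent_unique {S : Type*} [Fintype S] [Subsingleton S] (X : Ω → S) :
    Hent μ X = 0 := by
  unfold Hent
  rcases isEmpty_or_nonempty S with h | h
  · simp
  · obtain ⟨a⟩ := h
    have huniv : (Finset.univ : Finset S) = {a} := by
      ext s; simp [Subsingleton.elim s a]
    rw [huniv, Finset.sum_singleton]
    have : X ⁻¹' {a} = Set.univ := by
      ext ω; simp [Subsingleton.elim (X ω) a]
    simp [this]

lemma meas_eq_sum_fiber {T : Type*} [Fintype T] [MeasurableSpace T]
    [MeasurableSingletonClass T] (A : Set Ω) (hA : MeasurableSet A)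
    (Y : Ω → T) (hY : Measurable Y) :
    (μ A).toReal = ∑ t, (μ (A ∩ Y ⁻¹' {t})).toReal := by
  have h1 : A = ⋃ t, A ∩ Y ⁻¹' {t} := by
    ext ω; simp
  have h2 : μ A = ∑ t, μ (A ∩ Y ⁻¹' {t}) := by
    conv_lhs => rw [h1]
    rw [measure_iUnion ?_ fun t => hA.inter (hY (measurableSet_singleton t)), tsum_fintype]
    intro i j hij
    refine Set.disjoint_left.2 fun ω hi hj => hij ?_
    have := hi.2; have := hj.2
    simp only [Set.mem_preimage, Set.mem_singleton_iff] at *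
    rw [← hi.2, ← hj.2]
  rw [h2, ENNReal.toReal_sum (fun t _ => measure_ne_top μ _)]

lemma gibbs_aux {ι : Type*} [Fintype ι] (p b : ι → ℝ) (hp : ∀ i, 0 ≤ p i)
    (hb : ∀ i, 0 ≤ b i) (hpb : ∀ i, p i ≠ 0 → b i ≠ 0)
    (hps : ∑ i, p i = 1) (hbs : ∑ i, b i ≤ 1) :
    ∑ i, Real.negMulLog (p i) ≤ ∑ i, -(p i * Real.log (b i)) := by
  have key : ∀ i, Real.negMulLog (p i) + p i * Real.log (b i) ≤ b i - p i := by
    intro i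
    rcases eq_or_lt_of_le (hp i) with h0 | h0
    · simp [← h0, Real.negMulLog, hb i]
    · have hbpos : 0 < b i := lt_of_le_of_ne (hb i) (Ne.symm (hpb i (ne_of_gt h0)))
      have hlog : Real.log (b i / p i) ≤ b i / p i - 1 :=
        Real.log_le_sub_one_of_pos (by positivity)
      have h2 := mul_le_mul_of_nonneg_left hlog (le_of_lt h0)
      rw [Real.log_div (ne_of_gt hbpos) (ne_of_gt h0)] at h2
      have h3 : p i * (b i / p i - 1) = b i - p i := by field_simp
      rw [h3] at h2
      simp only [Real.negMulLog]
      nlinarith [h2]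
  have hsum := Finset.sum_le_sum (fun i (_ : i ∈ Finset.univ) => key i)
  rw [Finset.sum_sub_distrib, hps, Finset.sum_add_distrib] at hsum
  have e : ∑ i, -(p i * Real.log (b i)) = -∑ i, p i * Real.log (b i) := by
    simp
  linarith [hsum, hbs]


lemma toReal_mono_meas (A B : Set Ω) (h : A ⊆ B) :
    (μ A).toReal ≤ (μ B).toReal :=
  ENNReal.toReal_mono (measure_ne_top μ _) (measure_mono h)

lemma sum_meas_eq_one {S : Type*} [Fintype S] [MeasurableSpace S]
    [MeasurableSingletonClass S] (X : Ω → S) (hX : Measurable X) :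
    ∑ s, (μ (X ⁻¹' {s})).toReal = 1 := by
  have h := meas_eq_sum_fiber μ Set.univ MeasurableSet.univ X hX
  simp only [Set.univ_inter, measure_univ, ENNReal.toReal_one] at h
  exact h.symm

lemma MI_nonneg {S T : Type*} [Fintype S] [Fintype T] [MeasurableSpace S]
    [MeasurableSingletonClass S] [MeasurableSpace T] [MeasurableSingletonClass T]
    (X : Ω → S) (Y : Ω → T) (hX : Measurable X) (hY : Measurable Y) :
    0 ≤ MI μ X Y := by
  set p : S × T → ℝ := fun st => (μ (X ⁻¹' {st.1} ∩ Y ⁻¹' {st.2})).toReal with hp_def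
  set m1 : S → ℝ := fun s => (μ (X ⁻¹' {s})).toReal with hm1_def
  set m2 : T → ℝ := fun t => (μ (Y ⁻¹' {t})).toReal with hm2_def
  have hmarg1 : ∀ s, ∑ t, p (s, t) = m1 s := fun s =>
    (meas_eq_sum_fiber μ _ (hX (measurableSet_singleton s)) Y hY).symm
  have hmarg2 : ∀ t, ∑ s, p (s, t) = m2 t := by
    intro t
    show _ = (μ (Y ⁻¹' {t})).toReal
    rw [meas_eq_sum_fiber μ (Y ⁻¹' {t}) (hY (measurableSet_singleton t)) X hX]
    exact Finset.sum_congr rfl fun s _ => by rw [Set.inter_comm]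
  have hm1sum : ∑ s, m1 s = 1 := sum_meas_eq_one μ X hX
  have hm2sum : ∑ t, m2 t = 1 := sum_meas_eq_one μ Y hY
  have hple1 : ∀ st : S × T, p st ≤ m1 st.1 :=
    fun st => toReal_mono_meas μ _ _ Set.inter_subset_left
  have hple2 : ∀ st : S × T, p st ≤ m2 st.2 :=
    fun st => toReal_mono_meas μ _ _ Set.inter_subset_right
  have hgibbs := gibbs_aux p (fun st => m1 st.1 * m2 st.2)
    (fun st => ENNReal.toReal_nonneg)
    (fun st => mul_nonneg ENNReal.toReal_nonneg ENNReal.toReal_nonneg)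
    (fun st h => by
      have h1 : 0 < m1 st.1 := lt_of_lt_of_le (lt_of_le_of_ne ENNReal.toReal_nonneg
        (Ne.symm h)) (hple1 st)
      have h2 : 0 < m2 st.2 := lt_of_lt_of_le (lt_of_le_of_ne ENNReal.toReal_nonneg
        (Ne.symm h)) (hple2 st)
      positivity)
    (by
      rw [Fintype.sum_prod_type]
      rw [show ∑ s, ∑ t, p (s, t) = ∑ s, m1 s from
        Finset.sum_congr rfl fun s _ => hmarg1 s]
      exact hm1sum)
    (by
      rw [Fintype.sum_prod_type]
      have : ∀ s : S, ∑ t, m1 s * m2 t = m1 s := by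
        intro s; rw [← Finset.mul_sum, hm2sum, mul_one]
      rw [Finset.sum_congr rfl fun s _ => this s, hm1sum])
  have hpair : Hent μ (fun ω => (X ω, Y ω)) = ∑ st : S × T, Real.negMulLog (p st) := by
    unfold Hent
    apply Finset.sum_congr rfl
    intro st _
    have : (fun ω => (X ω, Y ω)) ⁻¹' {st} = X ⁻¹' {st.1} ∩ Y ⁻¹' {st.2} := by
      ext ω; simp [Prod.ext_iff]
    rw [this]
  have hrhs : ∑ st : S × T, -(p st * Real.log (m1 st.1 * m2 st.2))
      = Hent μ X + Hent μ Y := by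
    have hsplit : ∀ st : S × T, -(p st * Real.log (m1 st.1 * m2 st.2)) =
        -(p st * Real.log (m1 st.1)) + -(p st * Real.log (m2 st.2)) := by
      intro st
      by_cases h : p st = 0
      · simp [h]
      · have h1 : m1 st.1 ≠ 0 := fun hc =>
          h (le_antisymm (by rw [← hc] at *; exact hple1 st) ENNReal.toReal_nonneg)
        have h2 : m2 st.2 ≠ 0 := fun hc =>
          h (le_antisymm (by rw [← hc] at *; exact hple2 st) ENNReal.toReal_nonneg)
        rw [Real.log_mul h1 h2]; ring
    rw [Finset.sum_congr rfl fun st _ => hsplit st, Finset.sum_add_distrib]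
    have e1 : ∑ st : S × T, -(p st * Real.log (m1 st.1)) = Hent μ X := by
      rw [Fintype.sum_prod_type]
      unfold Hent
      apply Finset.sum_congr rfl
      intro s _
      rw [show ∑ t, -(p (s, t) * Real.log (m1 s)) =
        -((∑ t, p (s, t)) * Real.log (m1 s)) by rw [Finset.sum_mul]; simp, hmarg1 s]
      show -((μ (X ⁻¹' {s})).toReal * Real.log ((μ (X ⁻¹' {s})).toReal)) = _
      simp [Real.negMulLog]
    have e2 : ∑ st : S × T, -(p st * Real.log (m2 st.2)) = Hent μ Y := by
      rw [Fintype.sum_prod_type_right]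
      unfold Hent
      apply Finset.sum_congr rfl
      intro t _
      rw [show ∑ s, -(p (s, t) * Real.log (m2 t)) =
        -((∑ s, p (s, t)) * Real.log (m2 t)) by rw [Finset.sum_mul]; simp, hmarg2 t]
      show -((μ (Y ⁻¹' {t})).toReal * Real.log ((μ (Y ⁻¹' {t})).toReal)) = _
      simp [Real.negMulLog]
    rw [e1, e2]
  unfold MI
  rw [hpair]
  linarith [hgibbs, hrhs.symm.le, hrhs.le]


lemma CMI_nonneg {S T U : Type*} [Fintype S] [Fintype T] [Fintype U]
    [MeasurableSpace S] [MeasurableSingletonClass S]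
    [MeasurableSpace T] [MeasurableSingletonClass T]
    [MeasurableSpace U] [MeasurableSingletonClass U]
    (X : Ω → S) (Y : Ω → T) (Z : Ω → U)
    (hX : Measurable X) (hY : Measurable Y) (hZ : Measurable Z) :
    0 ≤ CMI μ X Y Z := by
  set p : S × T × U → ℝ := fun v =>
    (μ (X ⁻¹' {v.1} ∩ Y ⁻¹' {v.2.1} ∩ Z ⁻¹' {v.2.2})).toReal with hp_def
  set mXZ : S → U → ℝ := fun s u => (μ (X ⁻¹' {s} ∩ Z ⁻¹' {u})).toReal with hmXZ_def
  set mYZ : T → U → ℝ := fun t u => (μ (Y ⁻¹' {t} ∩ Z ⁻¹' {u})).toReal with hmYZ_def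
  set mZ : U → ℝ := fun u => (μ (Z ⁻¹' {u})).toReal with hmZ_def
  -- marginals
  have hmargT : ∀ (s : S) (u : U), ∑ t, p (s, t, u) = mXZ s u := by
    intro s u
    show _ = (μ (X ⁻¹' {s} ∩ Z ⁻¹' {u})).toReal
    rw [meas_eq_sum_fiber μ (X ⁻¹' {s} ∩ Z ⁻¹' {u})
      ((hX (measurableSet_singleton s)).inter (hZ (measurableSet_singleton u))) Y hY]
    refine Finset.sum_congr rfl fun t _ => ?_
    show (μ (X ⁻¹' {s} ∩ Y ⁻¹' {t} ∩ Z ⁻¹' {u})).toReal = _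
    rw [Set.inter_right_comm]
  have hmargS : ∀ w : T × U, ∑ s, p (s, w) = mYZ w.1 w.2 := by
    intro w
    show _ = (μ (Y ⁻¹' {w.1} ∩ Z ⁻¹' {w.2})).toReal
    rw [meas_eq_sum_fiber μ (Y ⁻¹' {w.1} ∩ Z ⁻¹' {w.2})
      ((hY (measurableSet_singleton w.1)).inter (hZ (measurableSet_singleton w.2))) X hX]
    refine Finset.sum_congr rfl fun s _ => ?_
    show (μ (X ⁻¹' {s} ∩ Y ⁻¹' {w.1} ∩ Z ⁻¹' {w.2})).toReal = _
    rw [Set.inter_comm (Y ⁻¹' {w.1} ∩ Z ⁻¹' {w.2}), ← Set.inter_assoc]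
  have hmargXZ : ∀ u : U, ∑ s, mXZ s u = mZ u := by
    intro u
    show _ = (μ (Z ⁻¹' {u})).toReal
    rw [meas_eq_sum_fiber μ (Z ⁻¹' {u}) (hZ (measurableSet_singleton u)) X hX]
    exact Finset.sum_congr rfl fun s _ => by rw [Set.inter_comm]
  have hmargYZ : ∀ u : U, ∑ t, mYZ t u = mZ u := by
    intro u
    show _ = (μ (Z ⁻¹' {u})).toReal
    rw [meas_eq_sum_fiber μ (Z ⁻¹' {u}) (hZ (measurableSet_singleton u)) Y hY]
    exact Finset.sum_congr rfl fun t _ => by rw [Set.inter_comm]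
  have hmZsum : ∑ u, mZ u = 1 := sum_meas_eq_one μ Z hZ
  -- bounds
  have hpleXZ : ∀ v : S × T × U, p v ≤ mXZ v.1 v.2.2 := fun v =>
    toReal_mono_meas μ _ _ (fun ω hω => ⟨hω.1.1, hω.2⟩)
  have hpleYZ : ∀ v : S × T × U, p v ≤ mYZ v.2.1 v.2.2 := fun v =>
    toReal_mono_meas μ _ _ (fun ω hω => ⟨hω.1.2, hω.2⟩)
  have hpleZ : ∀ v : S × T × U, p v ≤ mZ v.2.2 := fun v =>
    toReal_mono_meas μ _ _ (fun ω hω => hω.2)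
  set b : S × T × U → ℝ := fun v => mXZ v.1 v.2.2 * mYZ v.2.1 v.2.2 / mZ v.2.2 with hb_def
  have hppos : ∀ v : S × T × U, p v ≠ 0 →
      0 < mXZ v.1 v.2.2 ∧ 0 < mYZ v.2.1 v.2.2 ∧ 0 < mZ v.2.2 := by
    intro v h
    have h0 : 0 < p v := lt_of_le_of_ne ENNReal.toReal_nonneg (Ne.symm h)
    exact ⟨lt_of_lt_of_le h0 (hpleXZ v), lt_of_lt_of_le h0 (hpleYZ v),
      lt_of_lt_of_le h0 (hpleZ v)⟩
  have hgibbs := gibbs_aux p b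
    (fun v => ENNReal.toReal_nonneg)
    (fun v => by
      have h1 : (0:ℝ) ≤ mXZ v.1 v.2.2 := ENNReal.toReal_nonneg
      have h2 : (0:ℝ) ≤ mYZ v.2.1 v.2.2 := ENNReal.toReal_nonneg
      have h3 : (0:ℝ) ≤ mZ v.2.2 := ENNReal.toReal_nonneg
      positivity)
    (fun v h => by
      obtain ⟨h1, h2, h3⟩ := hppos v h
      exact ne_of_gt (div_pos (mul_pos h1 h2) h3))
    (by
      rw [Fintype.sum_prod_type, Finset.sum_comm]
      rw [Finset.sum_congr rfl fun w (_ : w ∈ Finset.univ) => hmargS w]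
      rw [Fintype.sum_prod_type, Finset.sum_comm]
      rw [Finset.sum_congr rfl fun u (_ : u ∈ Finset.univ) => hmargYZ u]
      exact hmZsum)
    (by
      rw [Fintype.sum_prod_type, Finset.sum_comm]
      have step1 : ∀ w : T × U, ∑ s, b (s, w) = mZ w.2 * mYZ w.1 w.2 / mZ w.2 := by
        intro w
        show ∑ s, mXZ s w.2 * mYZ w.1 w.2 / mZ w.2 = _
        rw [← Finset.sum_div, ← Finset.sum_mul, hmargXZ w.2]
      rw [Finset.sum_congr rfl fun w (_ : w ∈ Finset.univ) => step1 w]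
      rw [Fintype.sum_prod_type, Finset.sum_comm]
      have step2 : ∀ u, ∑ t, mZ u * mYZ t u / mZ u ≤ mZ u := by
        intro u
        by_cases h : mZ u = 0
        · simp [h]
        · have : ∀ t, mZ u * mYZ t u / mZ u = mYZ t u := by
            intro t; rw [mul_comm, mul_div_assoc, div_self h, mul_one]
          rw [Finset.sum_congr rfl fun t _ => this t, hmargYZ u]
      calc ∑ u, ∑ t, mZ u * mYZ t u / mZ u ≤ ∑ u, mZ u :=
            Finset.sum_le_sum fun u _ => step2 u
        _ = 1 := hmZsum)
  -- identify the three entropies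
  have hHXYZ : Hent μ (fun ω => (X ω, Y ω, Z ω)) = ∑ v : S × T × U, Real.negMulLog (p v) := by
    unfold Hent
    refine Finset.sum_congr rfl fun v _ => ?_
    have : (fun ω => (X ω, Y ω, Z ω)) ⁻¹' {v} =
        X ⁻¹' {v.1} ∩ Y ⁻¹' {v.2.1} ∩ Z ⁻¹' {v.2.2} := by
      ext ω; simp [Prod.ext_iff, and_assoc]
    rw [this]
  have hHXZ : Hent μ (fun ω => (X ω, Z ω)) =
      ∑ s, ∑ u, Real.negMulLog (mXZ s u) := by
    unfold Hent
    rw [Fintype.sum_prod_type]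
    refine Finset.sum_congr rfl fun s _ => Finset.sum_congr rfl fun u _ => ?_
    have : (fun ω => (X ω, Z ω)) ⁻¹' {(s, u)} = X ⁻¹' {s} ∩ Z ⁻¹' {u} := by
      ext ω; simp [Prod.ext_iff]
    rw [this]
  have hHYZ : Hent μ (fun ω => (Y ω, Z ω)) =
      ∑ w : T × U, Real.negMulLog (mYZ w.1 w.2) := by
    unfold Hent
    refine Finset.sum_congr rfl fun w _ => ?_
    have : (fun ω => (Y ω, Z ω)) ⁻¹' {w} = Y ⁻¹' {w.1} ∩ Z ⁻¹' {w.2} := by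
      ext ω; simp [Prod.ext_iff]
    rw [this]
  have hHZ : Hent μ Z = ∑ u, Real.negMulLog (mZ u) := rfl
  -- split the gibbs RHS
  have hsplit : ∀ v : S × T × U, -(p v * Real.log (b v)) =
      -(p v * Real.log (mXZ v.1 v.2.2)) + -(p v * Real.log (mYZ v.2.1 v.2.2))
        + p v * Real.log (mZ v.2.2) := by
    intro v
    by_cases h : p v = 0
    · simp [h]
    · obtain ⟨h1, h2, h3⟩ := hppos v h
      show -(p v * Real.log (mXZ v.1 v.2.2 * mYZ v.2.1 v.2.2 / mZ v.2.2)) = _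
      rw [Real.log_div (ne_of_gt (mul_pos h1 h2)) (ne_of_gt h3),
        Real.log_mul (ne_of_gt h1) (ne_of_gt h2)]
      ring
  have hrhs : ∑ v : S × T × U, -(p v * Real.log (b v)) =
      Hent μ (fun ω => (X ω, Z ω)) + Hent μ (fun ω => (Y ω, Z ω)) - Hent μ Z := by
    rw [Finset.sum_congr rfl fun v (_ : v ∈ Finset.univ) => hsplit v,
      Finset.sum_add_distrib, Finset.sum_add_distrib]
    have e1 : ∑ v : S × T × U, -(p v * Real.log (mXZ v.1 v.2.2)) =
        Hent μ (fun ω => (X ω, Z ω)) := by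
      rw [hHXZ, Fintype.sum_prod_type]
      refine Finset.sum_congr rfl fun s _ => ?_
      rw [Fintype.sum_prod_type, Finset.sum_comm]
      refine Finset.sum_congr rfl fun u _ => ?_
      rw [show ∑ t, -(p (s, t, u) * Real.log (mXZ s u)) =
        -((∑ t, p (s, t, u)) * Real.log (mXZ s u)) by rw [Finset.sum_mul]; simp,
        hmargT s u]
      simp [Real.negMulLog]
    have e2 : ∑ v : S × T × U, -(p v * Real.log (mYZ v.2.1 v.2.2)) =
        Hent μ (fun ω => (Y ω, Z ω)) := by
      rw [hHYZ, Fintype.sum_prod_type, Finset.sum_comm]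
      refine Finset.sum_congr rfl fun w _ => ?_
      rw [show ∑ s, -(p (s, w) * Real.log (mYZ w.1 w.2)) =
        -((∑ s, p (s, w)) * Real.log (mYZ w.1 w.2)) by rw [Finset.sum_mul]; simp,
        hmargS w]
      simp [Real.negMulLog]
    have e3 : ∑ v : S × T × U, p v * Real.log (mZ v.2.2) = -Hent μ Z := by
      rw [Fintype.sum_prod_type, Finset.sum_comm]
      have s1 : ∀ w : T × U, ∑ s, p (s, w) * Real.log (mZ w.2) =
          mYZ w.1 w.2 * Real.log (mZ w.2) := fun w => by
        rw [← Finset.sum_mul, hmargS w]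
      rw [Finset.sum_congr rfl fun w (_ : w ∈ Finset.univ) => s1 w,
        Fintype.sum_prod_type, Finset.sum_comm]
      have s2 : ∀ u, ∑ t, mYZ t u * Real.log (mZ u) = mZ u * Real.log (mZ u) :=
        fun u => by rw [← Finset.sum_mul, hmargYZ u]
      rw [Finset.sum_congr rfl fun u (_ : u ∈ Finset.univ) => s2 u, hHZ,
        ← Finset.sum_neg_distrib]
      exact Finset.sum_congr rfl fun u _ => by simp [Real.negMulLog]
    rw [e1, e2, e3]
    ring
  unfold CMI
  rw [hHXYZ]
  linarith [hgibbs, hrhs.le, hrhs.symm.le]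


lemma CMI_le_MI {S T U : Type*} [Fintype S] [Fintype T] [Fintype U]
    [MeasurableSpace T] [MeasurableSingletonClass T]
    [MeasurableSpace U] [MeasurableSingletonClass U]
    (A : Ω → S) (Y : Ω → T) (B : Ω → U) (hY : Measurable Y) (hB : Measurable B) :
    CMI μ A Y B ≤ MI μ (fun ω => (A ω, B ω)) Y := by
  have h1 : Hent μ (fun ω => ((A ω, B ω), Y ω)) = Hent μ (fun ω => (A ω, Y ω, B ω)) :=
    Hent_congr_inj μ (fun v : S × T × U => ((v.1, v.2.2), v.2.1))
      (fun v w h => by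
        obtain ⟨a, y, b⟩ := v; obtain ⟨a', y', b'⟩ := w
        simp only [Prod.mk.injEq] at h ⊢
        tauto)
      (fun ω => rfl)
  have h2 : Hent μ (fun ω => (B ω, Y ω)) = Hent μ (fun ω => (Y ω, B ω)) :=
    Hent_congr_inj μ (Prod.swap) Prod.swap_injective (fun ω => rfl)
  have h3 := MI_nonneg μ B Y hB hY
  unfold MI CMI at *
  linarith

lemma MI_le_MI_cons {S T U : Type*} [Fintype S] [Fintype T] [Fintype U]
    [MeasurableSpace S] [MeasurableSingletonClass S]
    [MeasurableSpace T] [MeasurableSingletonClass T]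
    [MeasurableSpace U] [MeasurableSingletonClass U]
    (A : Ω → S) (Y : Ω → T) (B : Ω → U)
    (hA : Measurable A) (hY : Measurable Y) (hB : Measurable B) :
    MI μ A Y ≤ MI μ (fun ω => (B ω, A ω)) Y := by
  have h1 : Hent μ (fun ω => ((B ω, A ω), Y ω)) = Hent μ (fun ω => (B ω, Y ω, A ω)) :=
    Hent_congr_inj μ (fun v : U × T × S => ((v.1, v.2.2), v.2.1))
      (fun v w h => by
        obtain ⟨a, y, b⟩ := v; obtain ⟨a', y', b'⟩ := w
        simp only [Prod.mk.injEq] at h ⊢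
        tauto)
      (fun ω => rfl)
  have h2 : Hent μ (fun ω => (A ω, Y ω)) = Hent μ (fun ω => (Y ω, A ω)) :=
    Hent_congr_inj μ (Prod.swap) Prod.swap_injective (fun ω => rfl)
  have h3 := CMI_nonneg μ B Y A hB hY hA
  unfold MI CMI at *
  linarith

lemma CMI_mono_left {S S' T U : Type*} [Fintype S] [Fintype S'] [Fintype T] [Fintype U]
    [MeasurableSpace S] [MeasurableSingletonClass S]
    [MeasurableSpace S'] [MeasurableSingletonClass S']
    [MeasurableSpace T] [MeasurableSingletonClass T]
    [MeasurableSpace U] [MeasurableSingletonClass U]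
    (A : Ω → S) (C : Ω → S') (Y : Ω → T) (B : Ω → U)
    (hA : Measurable A) (hC : Measurable C) (hY : Measurable Y) (hB : Measurable B) :
    CMI μ A Y B ≤ CMI μ (fun ω => (A ω, C ω)) Y B := by
  have h1 : Hent μ (fun ω => ((A ω, C ω), B ω)) = Hent μ (fun ω => (C ω, A ω, B ω)) :=
    Hent_congr_inj μ (fun v : S' × S × U => ((v.2.1, v.1), v.2.2))
      (fun v w h => by
        obtain ⟨a, c, b⟩ := v; obtain ⟨a', c', b'⟩ := w
        simp only [Prod.mk.injEq] at h ⊢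
        tauto)
      (fun ω => rfl)
  have h2 : Hent μ (fun ω => ((A ω, C ω), Y ω, B ω)) =
      Hent μ (fun ω => (C ω, Y ω, A ω, B ω)) :=
    Hent_congr_inj μ (fun v : S' × T × S × U => ((v.2.2.1, v.1), v.2.1, v.2.2.2))
      (fun v w h => by
        obtain ⟨a, c, b, d⟩ := v; obtain ⟨a', c', b', d'⟩ := w
        simp only [Prod.mk.injEq] at h ⊢
        tauto)
      (fun ω => rfl)
  have h3 : Hent μ (fun ω => (A ω, Y ω, B ω)) = Hent μ (fun ω => (Y ω, A ω, B ω)) :=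
    Hent_congr_inj μ (fun v : T × S × U => (v.2.1, v.1, v.2.2))
      (fun v w h => by
        obtain ⟨a, y, b⟩ := v; obtain ⟨a', y', b'⟩ := w
        simp only [Prod.mk.injEq] at h ⊢
        tauto)
      (fun ω => rfl)
  have h4 := CMI_nonneg μ C Y (fun ω => (A ω, B ω)) hC hY (hA.prodMk hB)
  unfold CMI at *
  linarith

lemma MI_congr_left {S S' T : Type*} [Fintype S] [Fintype S'] [Fintype T]
    {A : Ω → S} {A' : Ω → S'} (φ : S → S') (hφ : Function.Injective φ)
    (h : ∀ ω, A' ω = φ (A ω)) (Y : Ω → T) :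
    MI μ A' Y = MI μ A Y := by
  have h1 : Hent μ A' = Hent μ A := Hent_congr_inj μ φ hφ h
  have h2 : Hent μ (fun ω => (A' ω, Y ω)) = Hent μ (fun ω => (A ω, Y ω)) :=
    Hent_congr_inj μ (Prod.map φ id) (hφ.prodMap (fun a b hab => hab))
      (fun ω => by simp [h ω, Prod.map])
  unfold MI
  rw [h1, h2]

end Aux

/-- Decoder recovering the clean letters from user 2's outputs, given W23. -/
def dec2 {q n M13 M23 M31 M32 : ℕ} (C : MACode q n M13 M23 M31 M32) :
    ((Fin n → ZMod q) × Fin M23) → ((Fin n → ZMod q) × Fin M23) :=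
  fun p => (fun i => p.1 i - C.f2 p.2 i (fun j => p.1 ⟨j.1, j.2.trans i.2⟩), p.2)

lemma dec2_inj {q n M13 M23 M31 M32 : ℕ} (C : MACode q n M13 M23 M31 M32) :
    Function.Injective (dec2 C) := by
  rintro ⟨y, w⟩ ⟨y', w'⟩ h
  have hw : w = w' := congrArg Prod.snd h
  subst hw
  have h1 : ∀ i : Fin n, y i - C.f2 w i (fun j => y ⟨j.1, j.2.trans i.2⟩) =
      y' i - C.f2 w i (fun j => y' ⟨j.1, j.2.trans i.2⟩) :=
    fun i => congrFun (congrArg Prod.fst h) i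
  suffices hy : y = y' by rw [hy]
  funext i
  have main : ∀ k : ℕ, ∀ hk : k < n, y ⟨k, hk⟩ = y' ⟨k, hk⟩ := by
    intro k
    induction k using Nat.strong_induction_on with
    | _ k IH =>
      intro hk
      have hpre : (fun j : Fin k => y ⟨j.1, j.2.trans hk⟩) =
          (fun j : Fin k => y' ⟨j.1, j.2.trans hk⟩) :=
        funext fun j => IH j.1 j.2 (j.2.trans hk)
      have h2 := h1 ⟨k, hk⟩
      rw [hpre] at h2
      exact sub_left_inj.mp h2
  exact main i.1 i.2

lemma dec2_apply {q : ℕ} [NeZero q] {n M13 M23 M31 M32 : ℕ}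
    (C : MACode q n M13 M23 M31 M32)
    (w13 : Fin M13) (w23 : Fin M23) (w31 : Fin M31) (w32 : Fin M32)
    (z1 z2 z3 : Fin n → ZMod q) :
    dec2 C (fun i => MAY2 C w13 w23 w31 w32 z1 z2 z3 i, w23) =
      (fun i => tY2 C w13 w23 w31 w32 z1 z2 z3 i, w23) := by
  unfold dec2
  simp only [Prod.mk.injEq, and_true]
  funext i
  have hx2 : C.f2 w23 i
      (fun j => MAY2 C w13 w23 w31 w32 z1 z2 z3 ⟨j.1, j.2.trans i.2⟩) =
      (MAX C w13 w23 w31 w32 z1 z2 z3 i).2.1 := by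
    conv_rhs => rw [MAX]
    rfl
  show MAY2 C w13 w23 w31 w32 z1 z2 z3 i -
      C.f2 w23 i (fun j => MAY2 C w13 w23 w31 w32 z1 z2 z3 ⟨j.1, j.2.trans i.2⟩) = _
  rw [hx2]
  simp only [MAY2, tY2]
  ring

/-- Prefix of a length-`n` sequence. -/
def pref {q n : ℕ} (v : Fin n → ZMod q) (k : ℕ) (h : k ≤ n) : Fin k → ZMod q :=
  fun j => v ⟨j.1, lt_of_lt_of_le j.2 h⟩

set_option maxHeartbeats 1000000 in
/-- **Single-letterization bound for R32**: with {Z_{1,i}} and {Z_{2,i}} i.i.d., mutually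
independent, and independent of Z3^n and of the messages,
I(W32; Y2^n | W23) ≤ Σ_{i=1}^n I(U_i; Ỹ_{2,i}), where
U_i = (Ỹ1^{i−1}, Ỹ2^{i−1}, W32, W13, W23), Ỹ_{1,j} = X_{3,j} + Z_{1,j} and
Ỹ_{2,j} = X_{3,j} + Z_{1,j} + Z_{2,j}. -/
theorem madbc_r32_single_letterization {Ω : Type*} [MeasurableSpace Ω] (μ : Measure Ω)
    [IsProbabilityMeasure μ] (q : ℕ) [NeZero q] (hq : 2 ≤ q)
    (n M13 M23 M31 M32 : ℕ) (C : MACode q n M13 M23 M31 M32)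
    (W13 : Ω → Fin M13) (W23 : Ω → Fin M23) (W31 : Ω → Fin M31) (W32 : Ω → Fin M32)
    (Z1 Z2 Z3 : Ω → Fin n → ZMod q)
    (hW13 : Measurable W13) (hW23 : Measurable W23)
    (hW31 : Measurable W31) (hW32 : Measurable W32)
    (hZ1 : Measurable Z1) (hZ2 : Measurable Z2) (hZ3 : Measurable Z3)
    -- {Z_{1,i}} and {Z_{2,i}} are i.i.d. processes
    (hiid1 : iIndepFun (fun i ω => Z1 ω i) μ)
    (hid1 : ∀ i j : Fin n, IdentDistrib (fun ω => Z1 ω i) (fun ω => Z1 ω j) μ μ)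
    (hiid2 : iIndepFun (fun i ω => Z2 ω i) μ)
    (hid2 : ∀ i j : Fin n, IdentDistrib (fun ω => Z2 ω i) (fun ω => Z2 ω j) μ μ)
    -- Z1^n and Z2^n are mutually independent ...
    (hindep12 : IndepFun Z1 Z2 μ)
    -- ... and independent of Z3^n and of the messages
    (hindep : IndepFun (fun ω => (Z1 ω, Z2 ω))
      (fun ω => (Z3 ω, W13 ω, W23 ω, W31 ω, W32 ω)) μ) :
    CMI μ W32
      (fun ω => (fun i : Fin n =>
        MAY2 C (W13 ω) (W23 ω) (W31 ω) (W32 ω) (Z1 ω) (Z2 ω) (Z3 ω) i))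
      W23 ≤
    ∑ i : Fin n,
      MI μ
        -- U_i = (Ỹ1^{i-1}, Ỹ2^{i-1}, W32, W13, W23)
        (fun ω =>
          ((fun j : Fin i.1 =>
              tY1 C (W13 ω) (W23 ω) (W31 ω) (W32 ω) (Z1 ω) (Z2 ω) (Z3 ω)
                ⟨j.1, j.2.trans i.2⟩),
           (fun j : Fin i.1 =>
              tY2 C (W13 ω) (W23 ω) (W31 ω) (W32 ω) (Z1 ω) (Z2 ω) (Z3 ω)
                ⟨j.1, j.2.trans i.2⟩),
           W32 ω, W13 ω, W23 ω))
        -- Ỹ_{2,i}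
        (fun ω => tY2 C (W13 ω) (W23 ω) (W31 ω) (W32 ω) (Z1 ω) (Z2 ω) (Z3 ω) i) := by
  classical
  have hbase : Measurable (fun ω => (W13 ω, W23 ω, W31 ω, W32 ω, Z1 ω, Z2 ω, Z3 ω)) :=
    hW13.prodMk (hW23.prodMk (hW31.prodMk (hW32.prodMk (hZ1.prodMk
      (hZ2.prodMk hZ3)))))
  have hm : ∀ {S : Type} [MeasurableSpace S] (g : Fin M13 × Fin M23 × Fin M31 × Fin M32 ×
      (Fin n → ZMod q) × (Fin n → ZMod q) × (Fin n → ZMod q) → S),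
      Measurable (fun ω => g (W13 ω, W23 ω, W31 ω, W32 ω, Z1 ω, Z2 ω, Z3 ω)) :=
    fun g => (measurable_of_countable g).comp hbase
  set tv1 : Ω → Fin n → ZMod q :=
    fun ω i => tY1 C (W13 ω) (W23 ω) (W31 ω) (W32 ω) (Z1 ω) (Z2 ω) (Z3 ω) i with htv1_def
  set tv2 : Ω → Fin n → ZMod q :=
    fun ω i => tY2 C (W13 ω) (W23 ω) (W31 ω) (W32 ω) (Z1 ω) (Z2 ω) (Z3 ω) i with htv2_def
  set S3 : Ω → Fin M32 × Fin M13 × Fin M23 := fun ω => (W32 ω, W13 ω, W23 ω) with hS3_def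
  have htv1m : Measurable tv1 := hm (fun p i =>
    tY1 C p.1 p.2.1 p.2.2.1 p.2.2.2.1 p.2.2.2.2.1 p.2.2.2.2.2.1 p.2.2.2.2.2.2 i)
  have htv2m : Measurable tv2 := hm (fun p i =>
    tY2 C p.1 p.2.1 p.2.2.1 p.2.2.2.1 p.2.2.2.2.1 p.2.2.2.2.2.1 p.2.2.2.2.2.2 i)
  have hS3m : Measurable S3 := hW32.prodMk (hW13.prodMk hW23)
  have hpref1 : ∀ (k : ℕ) (hk : k ≤ n), Measurable (fun ω => pref (tv1 ω) k hk) :=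
    fun k hk => (measurable_of_countable (fun v : Fin n → ZMod q => pref v k hk)).comp htv1m
  have hpref2 : ∀ (k : ℕ) (hk : k ≤ n), Measurable (fun ω => pref (tv2 ω) k hk) :=
    fun k hk => (measurable_of_countable (fun v : Fin n → ZMod q => pref v k hk)).comp htv2m
  have hlet : ∀ i : Fin n, Measurable (fun ω => tv2 ω i) :=
    fun i => (measurable_of_countable (fun v : Fin n → ZMod q => v i)).comp htv2m
  -- Step 1: replace Y2^n by the clean sequence tY2^n (bijective given W23).
  have keyDec : CMI μ W32 (fun ω => (fun i : Fin n =>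
      MAY2 C (W13 ω) (W23 ω) (W31 ω) (W32 ω) (Z1 ω) (Z2 ω) (Z3 ω) i)) W23
      = CMI μ W32 tv2 W23 := by
    have hpt : ∀ ω, (tv2 ω, W23 ω) = dec2 C
        ((fun i : Fin n => MAY2 C (W13 ω) (W23 ω) (W31 ω) (W32 ω) (Z1 ω) (Z2 ω) (Z3 ω) i),
          W23 ω) :=
      fun ω => (dec2_apply C (W13 ω) (W23 ω) (W31 ω) (W32 ω) (Z1 ω) (Z2 ω) (Z3 ω)).symm
    have e2 : Hent μ (fun ω => (tv2 ω, W23 ω)) = Hent μ (fun ω =>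
        ((fun i : Fin n => MAY2 C (W13 ω) (W23 ω) (W31 ω) (W32 ω) (Z1 ω) (Z2 ω) (Z3 ω) i),
          W23 ω)) :=
      Hent_congr_inj μ (dec2 C) (dec2_inj C) hpt
    have e3 : Hent μ (fun ω => (W32 ω, tv2 ω, W23 ω)) = Hent μ (fun ω => (W32 ω,
        (fun i : Fin n => MAY2 C (W13 ω) (W23 ω) (W31 ω) (W32 ω) (Z1 ω) (Z2 ω) (Z3 ω) i),
          W23 ω)) :=
      Hent_congr_inj μ (Prod.map id (dec2 C))
        (Function.injective_id.prodMap (dec2_inj C))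
        (fun ω => by dsimp only [Prod.map]; rw [hpt ω]; rfl)
    simp only [CMI]
    rw [← e2, ← e3]
  -- the per-letter conditional entropy difference
  set G : ℕ → ℝ := fun k =>
    if hk : k ≤ n then
      Hent μ (fun ω => (S3 ω, pref (tv2 ω) k hk)) - Hent μ (fun ω => pref (tv2 ω) k hk)
    else 0 with hG_def
  have hstep : ∀ i : Fin n, CMI μ S3 (fun ω => tv2 ω i)
      (fun ω => pref (tv2 ω) i.1 (le_of_lt i.2)) = G i.1 - G (i.1 + 1) := by
    intro i
    have h1 : i.1 ≤ n := le_of_lt i.2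
    have h2 : i.1 + 1 ≤ n := i.2
    have g1 : G i.1 = Hent μ (fun ω => (S3 ω, pref (tv2 ω) i.1 h1)) -
        Hent μ (fun ω => pref (tv2 ω) i.1 h1) := dif_pos h1
    have g2 : G (i.1 + 1) = Hent μ (fun ω => (S3 ω, pref (tv2 ω) (i.1 + 1) h2)) -
        Hent μ (fun ω => pref (tv2 ω) (i.1 + 1) h2) := dif_pos h2
    have hsn : ∀ ω, pref (tv2 ω) (i.1 + 1) h2 =
        Fin.snoc (pref (tv2 ω) i.1 h1) (tv2 ω i) := by
      intro ω
      funext j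
      refine Fin.lastCases ?_ ?_ j
      · rw [Fin.snoc_last]; rfl
      · intro j'
        rw [Fin.snoc_castSucc]; rfl
    have hsnoc_inj : Function.Injective
        (fun p : ZMod q × (Fin i.1 → ZMod q) => Fin.snoc p.2 p.1 : _ → Fin (i.1+1) → ZMod q) := by
      intro p p' h
      have ha : p.1 = p'.1 := by
        have := congrFun h (Fin.last i.1)
        simpa [Fin.snoc_last] using this
      have hv : p.2 = p'.2 := funext fun j => by
        have := congrFun h (Fin.castSucc j)
        simpa [Fin.snoc_castSucc] using this
      exact Prod.ext ha hv
    have eA : Hent μ (fun ω => pref (tv2 ω) (i.1 + 1) h2) =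
        Hent μ (fun ω => (tv2 ω i, pref (tv2 ω) i.1 h1)) :=
      Hent_congr_inj μ _ hsnoc_inj (fun ω => hsn ω)
    have eB : Hent μ (fun ω => (S3 ω, pref (tv2 ω) (i.1 + 1) h2)) =
        Hent μ (fun ω => (S3 ω, tv2 ω i, pref (tv2 ω) i.1 h1)) :=
      Hent_congr_inj μ
        (Prod.map id (fun p : ZMod q × (Fin i.1 → ZMod q) => Fin.snoc p.2 p.1))
        (Function.injective_id.prodMap hsnoc_inj)
        (fun ω => by dsimp only [Prod.map]; rw [hsn ω]; rfl)
    simp only [CMI]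
    rw [g1, g2, eA, eB]
    ring
  have htel : ∑ i : Fin n, (G i.1 - G (i.1 + 1)) = G 0 - G n :=
    (Fin.sum_univ_eq_sum_range (fun k => G k - G (k + 1)) n).trans
      (Finset.sum_range_sub' G n)
  haveI hss : Subsingleton (Fin 0 → ZMod q) := ⟨fun a b => funext fun j => j.elim0⟩
  have hG0 : G 0 = Hent μ S3 := by
    have g0 : G 0 = Hent μ (fun ω => (S3 ω, pref (tv2 ω) 0 (Nat.zero_le n))) -
        Hent μ (fun ω => pref (tv2 ω) 0 (Nat.zero_le n)) := dif_pos (Nat.zero_le n)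
    rw [g0, Hent_unique μ (fun ω => pref (tv2 ω) 0 (Nat.zero_le n)), sub_zero]
    exact Hent_congr_inj μ
      (fun s : Fin M32 × Fin M13 × Fin M23 => (s, (fun j : Fin 0 => j.elim0 : Fin 0 → ZMod q)))
      (fun a b h => congrArg Prod.fst h)
      (fun ω => congrArg (Prod.mk (S3 ω)) (funext fun j => j.elim0))
  have hGn : G n = Hent μ (fun ω => (S3 ω, tv2 ω)) - Hent μ tv2 := dif_pos le_rfl
  have hchain : MI μ S3 tv2 = ∑ i : Fin n, CMI μ S3 (fun ω => tv2 ω i)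
      (fun ω => pref (tv2 ω) i.1 (le_of_lt i.2)) := by
    rw [Finset.sum_congr rfl fun i (_ : i ∈ Finset.univ) => hstep i, htel, hG0, hGn]
    simp only [MI]
    ring
  have hperl : ∀ i : Fin n, CMI μ S3 (fun ω => tv2 ω i)
      (fun ω => pref (tv2 ω) i.1 (le_of_lt i.2)) ≤
      MI μ
        (fun ω =>
          ((fun j : Fin i.1 =>
              tY1 C (W13 ω) (W23 ω) (W31 ω) (W32 ω) (Z1 ω) (Z2 ω) (Z3 ω)
                ⟨j.1, j.2.trans i.2⟩),
           (fun j : Fin i.1 =>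
              tY2 C (W13 ω) (W23 ω) (W31 ω) (W32 ω) (Z1 ω) (Z2 ω) (Z3 ω)
                ⟨j.1, j.2.trans i.2⟩),
           W32 ω, W13 ω, W23 ω))
        (fun ω => tY2 C (W13 ω) (W23 ω) (W31 ω) (W32 ω) (Z1 ω) (Z2 ω) (Z3 ω) i) := by
    intro i
    have h1 : i.1 ≤ n := le_of_lt i.2
    have step1 : CMI μ S3 (fun ω => tv2 ω i) (fun ω => pref (tv2 ω) i.1 h1) ≤
        MI μ (fun ω => (S3 ω, pref (tv2 ω) i.1 h1)) (fun ω => tv2 ω i) :=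
      CMI_le_MI μ S3 (fun ω => tv2 ω i) (fun ω => pref (tv2 ω) i.1 h1)
        (hlet i) (hpref2 i.1 h1)
    have step2 : MI μ (fun ω => (S3 ω, pref (tv2 ω) i.1 h1)) (fun ω => tv2 ω i) ≤
        MI μ (fun ω => (pref (tv1 ω) i.1 h1, S3 ω, pref (tv2 ω) i.1 h1))
          (fun ω => tv2 ω i) :=
      MI_le_MI_cons μ (fun ω => (S3 ω, pref (tv2 ω) i.1 h1)) (fun ω => tv2 ω i)
        (fun ω => pref (tv1 ω) i.1 h1) (hS3m.prodMk (hpref2 i.1 h1)) (hlet i)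
        (hpref1 i.1 h1)
    have step3 : MI μ (fun ω => (pref (tv1 ω) i.1 h1, pref (tv2 ω) i.1 h1, W32 ω, W13 ω, W23 ω))
        (fun ω => tv2 ω i) =
        MI μ (fun ω => (pref (tv1 ω) i.1 h1, S3 ω, pref (tv2 ω) i.1 h1))
          (fun ω => tv2 ω i) :=
      MI_congr_left μ
        (A := fun ω => (pref (tv1 ω) i.1 h1, S3 ω, pref (tv2 ω) i.1 h1))
        (A' := fun ω => (pref (tv1 ω) i.1 h1, pref (tv2 ω) i.1 h1, W32 ω, W13 ω, W23 ω))
        (fun v : (Fin i.1 → ZMod q) × (Fin M32 × Fin M13 × Fin M23) × (Fin i.1 → ZMod q) =>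
          (v.1, v.2.2, v.2.1))
        (fun v w h => by
          obtain ⟨a, b, c⟩ := v; obtain ⟨a', b', c'⟩ := w
          simp only [Prod.mk.injEq] at h ⊢
          tauto)
        (fun ω => rfl) (fun ω => tv2 ω i)
    exact le_trans step1 (le_trans step2 (le_of_eq step3.symm))
  calc CMI μ W32 (fun ω => (fun i : Fin n =>
        MAY2 C (W13 ω) (W23 ω) (W31 ω) (W32 ω) (Z1 ω) (Z2 ω) (Z3 ω) i)) W23
      = CMI μ W32 tv2 W23 := keyDec
    _ ≤ CMI μ (fun ω => (W32 ω, W13 ω)) tv2 W23 :=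
        CMI_mono_left μ W32 W13 tv2 W23 hW32 hW13 htv2m hW23
    _ ≤ MI μ (fun ω => ((W32 ω, W13 ω), W23 ω)) tv2 :=
        CMI_le_MI μ (fun ω => (W32 ω, W13 ω)) tv2 W23 htv2m hW23
    _ = MI μ S3 tv2 :=
        (MI_congr_left μ
          (fun v : (Fin M32 × Fin M13) × Fin M23 => (v.1.1, v.1.2, v.2))
          (fun v w h => by
            obtain ⟨⟨a, b⟩, c⟩ := v; obtain ⟨⟨a', b'⟩, c'⟩ := w
            simp only [Prod.mk.injEq] at h ⊢
            tauto)
          (fun ω => rfl) tv2).symm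
    _ = ∑ i : Fin n, CMI μ S3 (fun ω => tv2 ω i)
          (fun ω => pref (tv2 ω) i.1 (le_of_lt i.2)) := hchain
    _ ≤ _ := Finset.sum_le_sum fun i _ => hperl i

end
end
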